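/- For homomorphisms of type M₁ ⊗ 𝒪(−d) ⊕ 𝒪(−2) ⊕ 𝒪(−1) → N₁ ⊗ 𝒪 on ℙ(V), the constant c₁(1,1) equals dim(V)/dim(S^{d−1}V). Concretely: let δ : (S^{d−2}V* ⊕ S^{d−1}V*) ⊗ S^d V → S²V ⊕ V be the canonical contraction map. Then the supremum over all proper subspaces K ⊂ S^{d−2}V* ⊕ S^{d−1}V* not contained in either summand of the ratio codim(δ(K ⊗ S^d V)) / codim(K) equals dim V / dim S^{d−1}V. -/

import Mathlib

set_option maxHeartbeats 1600000
set_option synthInstance.maxHeartbeats 800000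

open MvPolynomial Module

noncomputable section

/-- The space `S^pV*` of homogeneous polynomials of degree `p` on `V = ℂ^{n+1}`. -/
abbrev Sh (n p : ℕ) : Submodule ℂ (MvPolynomial (Fin (n + 1)) ℂ) :=
  homogeneousSubmodule (Fin (n + 1)) ℂ p

/-- Multiplication `S^pV* → (S^qV* →ₗ S^{p+q}V*)` in the symmetric algebra. -/
def mulS (n p q : ℕ) : ↥(Sh n p) →ₗ[ℂ] ↥(Sh n q) →ₗ[ℂ] ↥(Sh n (p + q)) :=
  LinearMap.mk₂ ℂ
    (fun f g => ⟨f.1 * g.1,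
      (mem_homogeneousSubmodule _ _).mpr
        (((mem_homogeneousSubmodule _ _).mp f.2).mul
          ((mem_homogeneousSubmodule _ _).mp g.2))⟩)
    (fun f₁ f₂ g => Subtype.ext (by simp [add_mul]))
    (fun c f g => Subtype.ext (by simp [smul_mul_assoc]))
    (fun f g₁ g₂ => Subtype.ext (by simp [mul_add]))
    (fun c f g => Subtype.ext (by simp [mul_smul_comm]))

/-- Realizing `S^pV` as the dual of `S^pV*` (canonical in characteristic zero), the
contraction map `δ : (S^{d−2}V* ⊕ S^{d−1}V*) ⊗ S^dV → S²V ⊕ V` (`d = e + 2`), curried in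
the second variable:  `δ(f, g)(ξ) = (ξ ∘ (f·—), ξ ∘ (g·—))`. -/
def contr (n e : ℕ) (ξ : Module.Dual ℂ ↥(Sh n (e + 2))) :
    (↥(Sh n e) × ↥(Sh n (e + 1))) →ₗ[ℂ]
      (Module.Dual ℂ ↥(Sh n 2) × Module.Dual ℂ ↥(Sh n 1)) :=
  LinearMap.prodMap
    (((LinearMap.llcomp ℂ ↥(Sh n 2) ↥(Sh n (e + 2)) ℂ) ξ).comp (mulS n e 2))
    (((LinearMap.llcomp ℂ ↥(Sh n 1) ↥(Sh n (e + 2)) ℂ) ξ).comp (mulS n (e + 1) 1))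

/-- The image `δ(K ⊗ S^dV)` of `K ⊗ S^dV` under the contraction map. -/
def contrImg (n e : ℕ) (K : Submodule ℂ (↥(Sh n e) × ↥(Sh n (e + 1)))) :
    Submodule ℂ (Module.Dual ℂ ↥(Sh n 2) × Module.Dual ℂ ↥(Sh n 1)) :=
  ⨆ ξ : Module.Dual ℂ ↥(Sh n (e + 2)), Submodule.map (contr n e ξ) K

/- ======================  Auxiliary material  ====================== -/

instance shFD (n p : ℕ) : FiniteDimensional ℂ ↥(Sh n p) :=
  Submodule.finiteDimensional_of_le (S₂ := restrictTotalDegree (Fin (n+1)) ℂ p)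
    (fun _ hf => (mem_restrictTotalDegree _ _ _).mpr
      (((mem_homogeneousSubmodule _ _).mp hf).totalDegree_le))

namespace Stmt6Aux

/-- A finitely supported function of degree one is `single j 1`. -/
lemma degree_one_eq_single {σ : Type*} (d : σ →₀ ℕ) (hd : Finsupp.degree d = 1) :
    ∃ j, d = Finsupp.single j 1 := by
  classical
  have hne : d.support.Nonempty := by
    rcases Finset.eq_empty_or_nonempty d.support with h | h
    · exfalso
      have : Finsupp.degree d = 0 := by show ∑ i ∈ d.support, d i = 0; simp [h]
      omega
    · exact h
  obtain ⟨j, hj⟩ := hne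
  have hsum : d j + ∑ i ∈ d.support.erase j, d i = 1 := by
    rw [Finset.add_sum_erase _ _ hj]; exact hd
  have hdj : 1 ≤ d j := Nat.one_le_iff_ne_zero.mpr (Finsupp.mem_support_iff.mp hj)
  have h1 : d j = 1 := by omega
  have h2 : ∑ i ∈ d.support.erase j, d i = 0 := by omega
  refine ⟨j, ?_⟩
  have hsub : d.support ⊆ {j} := by
    intro i hi
    rcases eq_or_ne i j with rfl | hij
    · exact Finset.mem_singleton_self _
    · exact absurd (Finset.sum_eq_zero_iff.mp h2 i (Finset.mem_erase.mpr ⟨hij, hi⟩))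
        (Finsupp.mem_support_iff.mp hi)
  have := Finsupp.support_subset_singleton.mp hsub
  rwa [h1] at this

/-- The linear parameterization of degree-one forms by coefficients. -/
def deg1map (n : ℕ) : (Fin (n+1) → ℂ) →ₗ[ℂ] ↥(Sh n 1) where
  toFun c := ⟨∑ i, c i • X i, Submodule.sum_mem _ fun i _ =>
    Submodule.smul_mem _ _ ((mem_homogeneousSubmodule _ _).mpr (isHomogeneous_X _ i))⟩
  map_add' c d := by
    apply Subtype.ext
    simp [add_smul, Finset.sum_add_distrib]
  map_smul' a c := by
    apply Subtype.ext
    simp [Finset.smul_sum, smul_smul]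

lemma deg1map_bij (n : ℕ) : Function.Bijective (deg1map n) := by
  constructor
  · rw [injective_iff_map_eq_zero]
    intro c hc
    have h0 : (∑ i, c i • X i : MvPolynomial (Fin (n+1)) ℂ) = 0 :=
      congrArg Subtype.val hc
    funext j
    have := congrArg (coeff (Finsupp.single j 1)) h0
    simpa [coeff_sum, coeff_X', Finsupp.single_left_inj (one_ne_zero (α := ℕ)),
      Finset.sum_ite_eq] using this
  · rintro ⟨f, hf⟩
    refine ⟨fun i => coeff (Finsupp.single i 1) f, Subtype.ext ?_⟩
    have hhom : f.IsHomogeneous 1 := (mem_homogeneousSubmodule _ _).mp hf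
    show (∑ i, coeff (Finsupp.single i 1) f • X i : MvPolynomial (Fin (n+1)) ℂ) = f
    ext m
    rw [coeff_sum]
    by_cases hm : ∃ j, m = Finsupp.single j 1
    · obtain ⟨j, rfl⟩ := hm
      simp [coeff_X', Finsupp.single_left_inj (one_ne_zero (α := ℕ)), Finset.sum_ite_eq]
    · have hz : coeff m f = 0 := by
        apply hhom.coeff_eq_zero
        intro hdeg
        obtain ⟨j, rfl⟩ := degree_one_eq_single m hdeg
        exact hm ⟨j, rfl⟩
      rw [hz]
      apply Finset.sum_eq_zero
      intro i _
      rw [coeff_smul, coeff_X']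
      have : ¬ (Finsupp.single i 1 = m) := fun h => hm ⟨i, h.symm⟩
      simp [this]

lemma finrank_Sh1 (n : ℕ) : finrank ℂ ↥(Sh n 1) = n + 1 := by
  rw [← (LinearEquiv.ofBijective _ (deg1map_bij n)).finrank_eq]
  simp

/-- The bilinear condition map: `(u, v) ↦ f·u + g·v`. -/
def pairMul (n e : ℕ) (fg : ↥(Sh n e) × ↥(Sh n (e + 1))) :
    (↥(Sh n 2) × ↥(Sh n 1)) →ₗ[ℂ] ↥(Sh n (e + 2)) :=
  ((mulS n e 2 fg.1).comp (LinearMap.fst ℂ _ _)) +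
    ((mulS n (e + 1) 1 fg.2).comp (LinearMap.snd ℂ _ _))

lemma pairMul_coe (n e : ℕ) (fg : ↥(Sh n e) × ↥(Sh n (e + 1)))
    (x : ↥(Sh n 2) × ↥(Sh n 1)) :
    (pairMul n e fg x : MvPolynomial (Fin (n+1)) ℂ)
      = (fg.1 : MvPolynomial (Fin (n+1)) ℂ) * (x.1 : MvPolynomial (Fin (n+1)) ℂ)
        + (fg.2 : MvPolynomial (Fin (n+1)) ℂ) * (x.2 : MvPolynomial (Fin (n+1)) ℂ) := rfl

/-- `Z(K) = {(u,v) : f·u + g·v = 0 for all (f,g) ∈ K}`. -/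
def zspace (n e : ℕ) (K : Submodule ℂ (↥(Sh n e) × ↥(Sh n (e + 1)))) :
    Submodule ℂ (↥(Sh n 2) × ↥(Sh n 1)) :=
  ⨅ fg : K, LinearMap.ker (pairMul n e fg.1)

lemma mem_zspace {n e : ℕ} {K : Submodule ℂ (↥(Sh n e) × ↥(Sh n (e + 1)))}
    {x : ↥(Sh n 2) × ↥(Sh n 1)} :
    x ∈ zspace n e K ↔ ∀ fg ∈ K, pairMul n e fg x = 0 := by
  constructor
  · intro h fg hfg
    exact LinearMap.mem_ker.mp ((Submodule.mem_iInf _).mp h ⟨fg, hfg⟩)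
  · intro h
    rw [zspace, Submodule.mem_iInf]
    intro fg
    exact LinearMap.mem_ker.mpr (h fg.1 fg.2)

lemma psi_contr_apply (n e : ℕ) (ξ : Module.Dual ℂ ↥(Sh n (e + 2)))
    (fg : ↥(Sh n e) × ↥(Sh n (e + 1))) (x : ↥(Sh n 2) × ↥(Sh n 1)) :
    Module.dualProdDualEquivDual ℂ ↥(Sh n 2) ↥(Sh n 1) (contr n e ξ fg) x
      = ξ (pairMul n e fg x) := by
  cases fg with
  | mk f g =>
    cases x with
    | mk u v =>
      show Module.dualProdDualEquivDual ℂ ↥(Sh n 2) ↥(Sh n 1) (contr n e ξ (f, g)) (u, v) = _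
      rw [show contr n e ξ (f, g) = (ξ.comp (mulS n e 2 f), ξ.comp (mulS n (e+1) 1 g)) from rfl]
      rw [Module.dualProdDualEquivDual_apply]
      show ξ (mulS n e 2 f u) + ξ (mulS n (e+1) 1 g v) = _
      rw [← map_add]
      rfl

/-- The image of the contraction is exactly the annihilator of `Z(K)`. -/
lemma map_contrImg (n e : ℕ) (K : Submodule ℂ (↥(Sh n e) × ↥(Sh n (e + 1)))) :
    Submodule.map ((Module.dualProdDualEquivDual ℂ ↥(Sh n 2) ↥(Sh n 1) :
        (Module.Dual ℂ ↥(Sh n 2) × Module.Dual ℂ ↥(Sh n 1)) →ₗ[ℂ]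
          Module.Dual ℂ (↥(Sh n 2) × ↥(Sh n 1)))) (contrImg n e K)
      = (zspace n e K).dualAnnihilator := by
  apply le_antisymm
  · rw [contrImg, Submodule.map_iSup]
    apply iSup_le
    intro ξ
    rintro φ hφ
    simp only [Submodule.mem_map] at hφ
    obtain ⟨ψc, ⟨k, hkK, rfl⟩, rfl⟩ := hφ
    rw [Submodule.mem_dualAnnihilator]
    intro x hx
    exact (psi_contr_apply n e ξ k x).trans
      (by rw [(mem_zspace.mp hx) k hkK, map_zero])
  · have key : ((Submodule.map ((Module.dualProdDualEquivDual ℂ ↥(Sh n 2) ↥(Sh n 1) :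
        (Module.Dual ℂ ↥(Sh n 2) × Module.Dual ℂ ↥(Sh n 1)) →ₗ[ℂ]
          Module.Dual ℂ (↥(Sh n 2) × ↥(Sh n 1))))
        (contrImg n e K)).dualCoannihilator).dualAnnihilator
        = Submodule.map ((Module.dualProdDualEquivDual ℂ ↥(Sh n 2) ↥(Sh n 1) :
        (Module.Dual ℂ ↥(Sh n 2) × Module.Dual ℂ ↥(Sh n 1)) →ₗ[ℂ]
          Module.Dual ℂ (↥(Sh n 2) × ↥(Sh n 1)))) (contrImg n e K) :=
      Subspace.dualCoannihilator_dualAnnihilator_eq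
    rw [← key]
    apply Submodule.dualAnnihilator_anti
    intro x hx
    rw [Submodule.mem_dualCoannihilator] at hx
    rw [mem_zspace]
    intro fg hfg
    rw [← forall_dual_apply_eq_zero_iff ℂ (pairMul n e fg x)]
    intro ξ
    refine (psi_contr_apply n e ξ fg x).symm.trans (hx _ ?_)
    exact Submodule.mem_map_of_mem
      ((le_iSup (fun ξ' => Submodule.map (contr n e ξ') K) ξ) ⟨fg, hfg, rfl⟩)

lemma finrank_contrImg_add (n e : ℕ) (K : Submodule ℂ (↥(Sh n e) × ↥(Sh n (e + 1)))) :
    finrank ℂ ↥(contrImg n e K) + finrank ℂ ↥(zspace n e K)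
      = finrank ℂ ↥(Sh n 2) + finrank ℂ ↥(Sh n 1) := by
  have h1 : finrank ℂ ↥(contrImg n e K)
      = finrank ℂ ↥(Submodule.map ((Module.dualProdDualEquivDual ℂ ↥(Sh n 2) ↥(Sh n 1) :
        (Module.Dual ℂ ↥(Sh n 2) × Module.Dual ℂ ↥(Sh n 1)) →ₗ[ℂ]
          Module.Dual ℂ (↥(Sh n 2) × ↥(Sh n 1)))) (contrImg n e K)) :=
    (LinearEquiv.finrank_map_eq (Module.dualProdDualEquivDual ℂ ↥(Sh n 2) ↥(Sh n 1)) _).symm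
  rw [h1, map_contrImg]
  have h2 := Subspace.finrank_add_finrank_dualCoannihilator_eq (zspace n e K).dualAnnihilator
  rw [Subspace.dualAnnihilator_dualCoannihilator_eq] at h2
  rw [Module.finrank_prod] at h2
  exact h2

lemma numerator_eq (n e : ℕ) (K : Submodule ℂ (↥(Sh n e) × ↥(Sh n (e + 1)))) :
    ((finrank ℂ (Module.Dual ℂ ↥(Sh n 2) × Module.Dual ℂ ↥(Sh n 1)) : ℝ)
        - (finrank ℂ ↥(contrImg n e K) : ℝ)) = (finrank ℂ ↥(zspace n e K) : ℝ) := by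
  have h := finrank_contrImg_add n e K
  have hD : finrank ℂ (Module.Dual ℂ ↥(Sh n 2) × Module.Dual ℂ ↥(Sh n 1))
      = finrank ℂ ↥(Sh n 2) + finrank ℂ ↥(Sh n 1) := by
    rw [Module.finrank_prod, Subspace.dual_finrank_eq, Subspace.dual_finrank_eq]
  have := congrArg (Nat.cast : ℕ → ℝ) h
  push_cast at this
  rw [hD]
  push_cast
  linarith

/-- The element `X 0 ^ p` of `Sh n p`. -/
def xp (n p : ℕ) : ↥(Sh n p) :=
  ⟨X 0 ^ p, (mem_homogeneousSubmodule _ _).mpr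
    (by simpa using (isHomogeneous_X ℂ (0 : Fin (n+1))).pow p)⟩

lemma xp_ne_zero (n p : ℕ) : xp n p ≠ 0 := by
  intro h
  have : (X 0 ^ p : MvPolynomial (Fin (n+1)) ℂ) = 0 := congrArg Subtype.val h
  exact pow_ne_zero p (X_ne_zero (R := ℂ) (0 : Fin (n+1))) this

lemma mem_fst' {n e : ℕ} (x : ↥(Sh n e) × ↥(Sh n (e + 1))) :
    x ∈ Submodule.fst ℂ ↥(Sh n e) ↥(Sh n (e + 1)) ↔ x.2 = 0 := by
  simp [Submodule.fst, Submodule.mem_comap]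

lemma mem_snd' {n e : ℕ} (x : ↥(Sh n e) × ↥(Sh n (e + 1))) :
    x ∈ Submodule.snd ℂ ↥(Sh n e) ↥(Sh n (e + 1)) ↔ x.1 = 0 := by
  simp [Submodule.snd, Submodule.mem_comap]

/-- Multiplication by `X 0` as a map `S^eV* → S^{e+1}V*` (negated). -/
def Lmap (n e : ℕ) : ↥(Sh n e) →ₗ[ℂ] ↥(Sh n (e+1)) := -((mulS n e 1).flip (xp n 1))

/-- The extremal subspace `K₀ = {(f, −X₀·f)}`. -/
def K0 (n e : ℕ) : Submodule ℂ (↥(Sh n e) × ↥(Sh n (e+1))) :=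
  LinearMap.range ((LinearMap.id : ↥(Sh n e) →ₗ[ℂ] ↥(Sh n e)).prod (Lmap n e))

def Jmap (n : ℕ) : ↥(Sh n 1) →ₗ[ℂ] ↥(Sh n 2) × ↥(Sh n 1) :=
  (mulS n 1 1 (xp n 1)).prod LinearMap.id

lemma Lmap_coe (n e : ℕ) (f : ↥(Sh n e)) :
    (Lmap n e f : MvPolynomial (Fin (n+1)) ℂ)
      = -((f : MvPolynomial (Fin (n+1)) ℂ) * X 0 ^ 1) := rfl

lemma zspace_K0 (n e : ℕ) : zspace n e (K0 n e) = LinearMap.range (Jmap n) := by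
  apply le_antisymm
  · rintro ⟨u, v⟩ hx
    have h := mem_zspace.mp hx (xp n e, Lmap n e (xp n e)) ⟨xp n e, rfl⟩
    have hval := congrArg Subtype.val h
    rw [pairMul_coe] at hval
    rw [ZeroMemClass.coe_zero] at hval
    have hfac : (X 0 ^ e : MvPolynomial (Fin (n+1)) ℂ)
        * ((u : MvPolynomial (Fin (n+1)) ℂ) - X 0 ^ 1 * (v : MvPolynomial (Fin (n+1)) ℂ))
        = 0 := by
      rw [Lmap_coe] at hval
      simp only [xp] at hval ⊢
      linear_combination hval
    have huv : (u : MvPolynomial (Fin (n+1)) ℂ)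
        - X 0 ^ 1 * (v : MvPolynomial (Fin (n+1)) ℂ) = 0 := by
      rcases mul_eq_zero.mp hfac with h' | h'
      · exact absurd h' (pow_ne_zero e (X_ne_zero (R := ℂ) _))
      · exact h'
    refine ⟨v, ?_⟩
    apply Prod.ext
    · apply Subtype.ext
      show (X 0 ^ 1 : MvPolynomial (Fin (n+1)) ℂ) * (v : MvPolynomial (Fin (n+1)) ℂ)
        = (u : MvPolynomial (Fin (n+1)) ℂ)
      linear_combination -huv
    · rfl
  · rintro _ ⟨v, rfl⟩
    rw [mem_zspace]
    rintro _ ⟨f, rfl⟩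
    apply Subtype.ext
    have hval : ((pairMul n e ((LinearMap.id.prod (Lmap n e)) f) ((Jmap n) v) : ↥(Sh n (e+2))) :
        MvPolynomial (Fin (n+1)) ℂ)
      = (f : MvPolynomial (Fin (n+1)) ℂ) * (X 0 ^ 1 * (v : MvPolynomial (Fin (n+1)) ℂ))
        + (-((f : MvPolynomial (Fin (n+1)) ℂ) * X 0 ^ 1)) * (v : MvPolynomial (Fin (n+1)) ℂ) :=
      rfl
    rw [hval, ZeroMemClass.coe_zero]
    ring

lemma finrank_zspace_K0 (n e : ℕ) :
    finrank ℂ ↥(zspace n e (K0 n e)) = finrank ℂ ↥(Sh n 1) := by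
  rw [zspace_K0]
  exact LinearMap.finrank_range_of_inj (fun a b h => congrArg Prod.snd h)

lemma finrank_K0 (n e : ℕ) : finrank ℂ ↥(K0 n e) = finrank ℂ ↥(Sh n e) :=
  LinearMap.finrank_range_of_inj (fun a b h => congrArg Prod.fst h)

lemma K0_ne_top (n e : ℕ) : K0 n e ≠ ⊤ := by
  intro h
  have hmem : ((0 : ↥(Sh n e)), xp n (e+1)) ∈ K0 n e := by rw [h]; trivial
  obtain ⟨f, hf⟩ := hmem
  have h1 : f = 0 := congrArg Prod.fst hf
  have h2 : Lmap n e f = xp n (e+1) := congrArg Prod.snd hf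
  rw [h1, map_zero] at h2
  exact xp_ne_zero n (e+1) h2.symm

lemma K0_not_le_fst (n e : ℕ) :
    ¬ K0 n e ≤ Submodule.fst ℂ ↥(Sh n e) ↥(Sh n (e + 1)) := by
  intro hle
  have hmem : (xp n e, Lmap n e (xp n e)) ∈ K0 n e := ⟨xp n e, rfl⟩
  have h := (mem_fst' _).mp (hle hmem)
  have hval := congrArg Subtype.val h
  rw [Lmap_coe] at hval
  simp only [xp, ZeroMemClass.coe_zero, neg_eq_zero] at hval
  exact pow_ne_zero (e+1) (X_ne_zero (R := ℂ) (0 : Fin (n+1))) (by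
    rw [pow_succ]
    simpa [pow_one] using hval)

lemma K0_not_le_snd (n e : ℕ) :
    ¬ K0 n e ≤ Submodule.snd ℂ ↥(Sh n e) ↥(Sh n (e + 1)) := by
  intro hle
  have hmem : (xp n e, Lmap n e (xp n e)) ∈ K0 n e := ⟨xp n e, rfl⟩
  have h := (mem_snd' _).mp (hle hmem)
  exact xp_ne_zero n e h

end Stmt6Aux

open Stmt6Aux

/-- For homomorphisms of type `M₁ ⊗ 𝒪(−d) ⊕ 𝒪(−2) ⊕ 𝒪(−1) → N₁ ⊗ 𝒪` on `ℙ(V)` the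
constant `c₁(1,1)` equals `dim V / dim S^{d−1}V`:  the supremum, over all proper subspaces
`K ⊂ S^{d−2}V* ⊕ S^{d−1}V*` not contained in either summand, of
`codim(δ(K ⊗ S^dV)) / codim K`, equals `dim V / dim S^{d−1}V`  (`d = e + 2`,
`dim V = n + 1`). -/
theorem stmt6 (n e : ℕ) :
    sSup {x : ℝ | ∃ K : Submodule ℂ (↥(Sh n e) × ↥(Sh n (e + 1))),
        K ≠ ⊤ ∧ ¬ K ≤ Submodule.fst ℂ ↥(Sh n e) ↥(Sh n (e + 1)) ∧
        ¬ K ≤ Submodule.snd ℂ ↥(Sh n e) ↥(Sh n (e + 1)) ∧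
        x = ((finrank ℂ (Module.Dual ℂ ↥(Sh n 2) × Module.Dual ℂ ↥(Sh n 1)) : ℝ)
              - (finrank ℂ ↥(contrImg n e K) : ℝ)) /
            ((finrank ℂ (↥(Sh n e) × ↥(Sh n (e + 1))) : ℝ) - (finrank ℂ ↥K : ℝ))}
      = (n + 1 : ℝ) / (finrank ℂ ↥(Sh n (e + 1)) : ℝ) := by
  haveI : Nontrivial ↥(Sh n (e+1)) := nontrivial_of_ne (xp n (e+1)) 0 (xp_ne_zero n (e+1))
  have hN : 0 < finrank ℂ ↥(Sh n (e+1)) := finrank_pos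
  have hPN : finrank ℂ (↥(Sh n e) × ↥(Sh n (e + 1)))
      = finrank ℂ ↥(Sh n e) + finrank ℂ ↥(Sh n (e+1)) := Module.finrank_prod
  -- upper bound
  have hub : ∀ x ∈ {x : ℝ | ∃ K : Submodule ℂ (↥(Sh n e) × ↥(Sh n (e + 1))),
        K ≠ ⊤ ∧ ¬ K ≤ Submodule.fst ℂ ↥(Sh n e) ↥(Sh n (e + 1)) ∧
        ¬ K ≤ Submodule.snd ℂ ↥(Sh n e) ↥(Sh n (e + 1)) ∧
        x = ((finrank ℂ (Module.Dual ℂ ↥(Sh n 2) × Module.Dual ℂ ↥(Sh n 1)) : ℝ)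
              - (finrank ℂ ↥(contrImg n e K) : ℝ)) /
            ((finrank ℂ (↥(Sh n e) × ↥(Sh n (e + 1))) : ℝ) - (finrank ℂ ↥K : ℝ))},
      x ≤ (n + 1 : ℝ) / (finrank ℂ ↥(Sh n (e + 1)) : ℝ) := by
    rintro x ⟨K, hKtop, hKfst, hKsnd, rfl⟩
    rw [numerator_eq n e K]
    have hk : finrank ℂ ↥K < finrank ℂ (↥(Sh n e) × ↥(Sh n (e + 1))) :=
      Submodule.finrank_lt hKtop
    have hden : (0:ℝ) < (finrank ℂ (↥(Sh n e) × ↥(Sh n (e + 1))) : ℝ) - (finrank ℂ ↥K : ℝ) := by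
      have h' := (Nat.cast_lt (α := ℝ)).mpr hk
      linarith only [h']
    by_cases hZ : zspace n e K = ⊥
    · rw [hZ, finrank_bot]
      simp only [Nat.cast_zero, zero_div]
      positivity
    · obtain ⟨⟨u, v⟩, huv, hne⟩ := Submodule.exists_mem_ne_zero_of_ne_bot hZ
      -- v ≠ 0
      have hv : v ≠ 0 := by
        intro hv0
        apply hKsnd
        intro fg hfg
        rw [mem_snd']
        have hval := congrArg Subtype.val (mem_zspace.mp huv fg hfg)
        rw [pairMul_coe] at hval
        rw [hv0] at hval
        simp only [ZeroMemClass.coe_zero, mul_zero, add_zero] at hval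
        have hu : u ≠ 0 := by
          intro hu0
          exact hne (by rw [hu0, hv0]; rfl)
        rcases mul_eq_zero.mp hval with h' | h'
        · exact Subtype.ext h'
        · exact absurd (Subtype.ext h' : u = 0) hu
      -- finrank K ≤ finrank (Sh n e)
      have hinjK : Function.Injective ((LinearMap.fst ℂ ↥(Sh n e) ↥(Sh n (e+1))).comp
          K.subtype) := by
        intro a b hab
        have hab' : (a.1).1 = (b.1).1 := hab
        have hmem : a.1 - b.1 ∈ K := K.sub_mem a.2 b.2
        have hval := congrArg Subtype.val (mem_zspace.mp huv _ hmem)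
        rw [pairMul_coe] at hval
        simp only [Prod.fst_sub, Prod.snd_sub, Submodule.coe_sub, hab', sub_self,
          ZeroMemClass.coe_zero, zero_mul, zero_add] at hval
        rcases mul_eq_zero.mp hval with h' | h'
        · have h2 : (a.1).2 = (b.1).2 :=
            Subtype.ext (sub_eq_zero.mp h')
          exact Subtype.ext (Prod.ext hab' h2)
        · exact absurd (Subtype.ext h' : v = 0) hv
      have hkP : finrank ℂ ↥K ≤ finrank ℂ ↥(Sh n e) :=
        LinearMap.finrank_le_finrank_of_injective hinjK
      -- finrank zspace ≤ n + 1
      obtain ⟨fg0, hfg0K, hfg0⟩ := SetLike.not_le_iff_exists.mp hKsnd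
      have hf0 : fg0.1 ≠ 0 := fun h => hfg0 ((mem_snd' _).mpr h)
      have hinjZ : Function.Injective ((LinearMap.snd ℂ ↥(Sh n 2) ↥(Sh n 1)).comp
          (zspace n e K).subtype) := by
        intro a b hab
        have hab' : (a.1).2 = (b.1).2 := hab
        have hmem : a.1 - b.1 ∈ zspace n e K :=
          (zspace n e K).sub_mem a.2 b.2
        have hval := congrArg Subtype.val (mem_zspace.mp hmem fg0 hfg0K)
        rw [pairMul_coe] at hval
        simp only [Prod.fst_sub, Prod.snd_sub, Submodule.coe_sub, hab', sub_self,
          ZeroMemClass.coe_zero, mul_zero, add_zero] at hval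
        rcases mul_eq_zero.mp hval with h' | h'
        · exact absurd (Subtype.ext h' : fg0.1 = 0) hf0
        · have h1 : (a.1).1 = (b.1).1 :=
            Subtype.ext (sub_eq_zero.mp h')
          exact Subtype.ext (Prod.ext h1 hab')
      have hz : finrank ℂ ↥(zspace n e K) ≤ n + 1 := by
        have := LinearMap.finrank_le_finrank_of_injective hinjZ
        rwa [finrank_Sh1] at this
      -- conclude
      have hnn : ((finrank ℂ ↥(Sh n (e+1)) : ℕ) : ℝ)
          ≤ (finrank ℂ (↥(Sh n e) × ↥(Sh n (e + 1))) : ℝ) - (finrank ℂ ↥K : ℝ) := by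
        rw [hPN]
        push_cast
        have h' := (Nat.cast_le (α := ℝ)).mpr hkP
        linarith only [h']
      refine div_le_div₀ ?_ ?_ ?_ hnn
      · positivity
      · exact_mod_cast hz
      · exact_mod_cast hN
  apply le_antisymm
  · apply csSup_le
    · refine ⟨_, ⟨K0 n e, K0_ne_top n e, K0_not_le_fst n e, K0_not_le_snd n e, rfl⟩⟩
    · exact hub
  · apply le_csSup ⟨_, hub⟩
    refine ⟨K0 n e, K0_ne_top n e, K0_not_le_fst n e, K0_not_le_snd n e, ?_⟩
    rw [numerator_eq n e (K0 n e), finrank_zspace_K0, finrank_Sh1, finrank_K0, hPN]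
    push_cast
    rw [add_sub_cancel_left]

end
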